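/- For every integer n ≥ 2, the graph R_n has diameter exactly 2n−1; in fact dist(c_0, c_n) = 2n−1. -/

import Mathlib

open SimpleGraph

/-- Vertices of the graph `R (m+1)`: `A i`, `B i` are `a_{i+1}`, `b_{i+1}` for `i : Fin m`,
and `C j` is `c_j` for `j : Fin (m+2)`.  (`RV m` carries the vertices of `R_{m+1}`,
which is `Q_m` together with the extra vertex `c_{m+1}`.) -/
inductive RV (m : ℕ) where
  | A : Fin m → RV m
  | B : Fin m → RV m
  | C : Fin (m + 2) → RV m
deriving DecidableEq

/-- The graph `R_{m+1}`: the graph `Q_m` (edges `c_{i-1}a_i`, `c_i a_i`, `c_{i-1}b_i`,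
`c_i b_i`, `a_i b_i` for `1 ≤ i ≤ m`) together with a new vertex `c_{m+1}` adjacent
only to `c_m`. -/
def Rgraph (m : ℕ) : SimpleGraph (RV m) :=
  SimpleGraph.fromRel (fun x y =>
    match x, y with
    | .A i, .B j => i.val = j.val
    | .A i, .C j => j.val = i.val ∨ j.val = i.val + 1
    | .B i, .C j => j.val = i.val ∨ j.val = i.val + 1
    | .C i, .C j => i.val = m ∧ j.val = m + 1
    | _, _ => False)

namespace Rproof
variable {m : ℕ}

def f : RV m → ℕ
  | .A i => 2 * i.val + 1
  | .B i => 2 * i.val + 1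
  | .C j => if j.val = m + 1 then 2 * m + 1 else 2 * j.val

lemma lip {x y : RV m} (h : (Rgraph m).Adj x y) : f y ≤ f x + 1 ∧ f x ≤ f y + 1 := by
  rw [Rgraph, fromRel_adj] at h
  obtain ⟨hne, h⟩ := h
  rcases x with i | i | j <;> rcases y with i' | i' | j' <;>
    simp only [f] at *
  all_goals
    (try have := i.isLt); (try have := i'.isLt);
    (try have := j.isLt); (try have := j'.isLt);
    (try simp only [false_or, or_false] at h)
  all_goals
    first
    | exact h.elim
    | (rcases h with h | h <;> (try split_ifs) <;> omega)
    | ((try split_ifs) <;> omega)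

lemma f_le_of_walk {x y : RV m} (p : (Rgraph m).Walk x y) : f y ≤ f x + p.length := by
  induction p with
  | nil => simp
  | cons h q ih =>
      have h2 := lip h
      simp only [SimpleGraph.Walk.length_cons]
      omega

lemma adj_CA {j : Fin (m + 2)} {i : Fin m} (h : j.val = i.val ∨ j.val = i.val + 1) :
    (Rgraph m).Adj (RV.C j) (RV.A i) := by
  rw [Rgraph, fromRel_adj]
  exact ⟨fun hc => (by cases hc), Or.inr h⟩

lemma adj_CB {j : Fin (m + 2)} {i : Fin m} (h : j.val = i.val ∨ j.val = i.val + 1) :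
    (Rgraph m).Adj (RV.C j) (RV.B i) := by
  rw [Rgraph, fromRel_adj]
  exact ⟨fun hc => (by cases hc), Or.inr h⟩

lemma adj_CC {j j' : Fin (m + 2)} (h : j.val = m ∧ j'.val = m + 1) :
    (Rgraph m).Adj (RV.C j) (RV.C j') := by
  rw [Rgraph, fromRel_adj]
  refine ⟨fun hc => ?_, Or.inl h⟩
  cases hc; omega

/-- walk from C j to C (m+1) of length 2d+1 where j + d = m -/
lemma walkR (d : ℕ) : ∀ j (h : j + d = m),
    ∃ p : (Rgraph m).Walk (RV.C ⟨j, by omega⟩) (RV.C (Fin.last (m + 1))),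
      p.length = 2 * d + 1 := by
  induction d with
  | zero =>
      intro j h
      refine ⟨SimpleGraph.Walk.cons (adj_CC ⟨by simp; omega, by simp [Fin.last]⟩)
        SimpleGraph.Walk.nil, by simp⟩
  | succ d ih =>
      intro j h
      obtain ⟨q, hq⟩ := ih (j + 1) (by omega)
      refine ⟨SimpleGraph.Walk.cons (adj_CA (i := ⟨j, by omega⟩) (Or.inl rfl))
        (SimpleGraph.Walk.cons (adj_CA (j := ⟨j + 1, by omega⟩) (Or.inr rfl)).symm q),
        by simp [hq]; ring⟩

/-- walk from C 0 to C j of length 2j, for j ≤ m+1... here j ≤ m -/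
lemma walkL : ∀ j (h : j ≤ m),
    ∃ p : (Rgraph m).Walk (RV.C 0) (RV.C ⟨j, by omega⟩), p.length = 2 * j := by
  intro j
  induction j with
  | zero =>
      intro h
      refine ⟨(by exact SimpleGraph.Walk.nil : (Rgraph m).Walk (RV.C 0) (RV.C 0)).copy rfl
        (by norm_num [Fin.ext_iff]), by simp⟩
  | succ j ih =>
      intro h
      obtain ⟨q, hq⟩ := ih (by omega)
      refine ⟨q.append (SimpleGraph.Walk.cons (adj_CA (i := ⟨j, by omega⟩) (Or.inl rfl))
        (SimpleGraph.Walk.cons (adj_CA (j := ⟨j + 1, by omega⟩) (Or.inr rfl)).symm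
          SimpleGraph.Walk.nil)), by simp [hq]; ring⟩

lemma f_le (u : RV m) : f u ≤ 2 * m + 1 := by
  rcases u with i | i | j <;> simp only [f]
  · have := i.isLt; omega
  · have := i.isLt; omega
  · have := j.isLt; split_ifs <;> omega

lemma walkTo (u : RV m) : ∃ p : (Rgraph m).Walk (RV.C 0) u, p.length = f u := by
  rcases u with i | i | j
  · obtain ⟨q, hq⟩ := walkL (m := m) i.val i.isLt.le
    exact ⟨q.append (SimpleGraph.Walk.cons (adj_CA (Or.inl rfl)) SimpleGraph.Walk.nil),
      by simp [hq, f]; try ring⟩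
  · obtain ⟨q, hq⟩ := walkL (m := m) i.val i.isLt.le
    exact ⟨q.append (SimpleGraph.Walk.cons (adj_CB (Or.inl rfl)) SimpleGraph.Walk.nil),
      by simp [hq, f]; try ring⟩
  · by_cases hj : j.val = m + 1
    · obtain ⟨q, hq⟩ := walkL (m := m) m le_rfl
      refine ⟨(q.append (SimpleGraph.Walk.cons
        (adj_CC (j' := Fin.last (m + 1)) ⟨rfl, rfl⟩) SimpleGraph.Walk.nil)).copy rfl
        (by congr 1; exact Fin.ext (by simp [Fin.last, hj])), ?_⟩
      simp [hq, f, hj]; try ring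
    · have hj' : j.val ≤ m := by have := j.isLt; omega
      obtain ⟨q, hq⟩ := walkL (m := m) j.val hj'
      exact ⟨q.copy rfl (by congr 1), by simp [hq, f, hj]⟩

lemma walkFrom (u : RV m) :
    ∃ p : (Rgraph m).Walk u (RV.C (Fin.last (m + 1))), p.length = 2 * m + 1 - f u := by
  rcases u with i | i | j
  · obtain ⟨q, hq⟩ := walkR (m := m) (m - i.val - 1) (i.val + 1) (by have := i.isLt; omega)
    refine ⟨SimpleGraph.Walk.cons (adj_CA (j := ⟨i.val + 1, by have := i.isLt; omega⟩)
      (Or.inr rfl)).symm q, ?_⟩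
    have := i.isLt
    simp only [SimpleGraph.Walk.length_cons, hq, f]
    omega
  · obtain ⟨q, hq⟩ := walkR (m := m) (m - i.val - 1) (i.val + 1) (by have := i.isLt; omega)
    refine ⟨SimpleGraph.Walk.cons (adj_CB (j := ⟨i.val + 1, by have := i.isLt; omega⟩)
      (Or.inr rfl)).symm q, ?_⟩
    have := i.isLt
    simp only [SimpleGraph.Walk.length_cons, hq, f]
    omega
  · by_cases hj : j.val = m + 1
    · refine ⟨SimpleGraph.Walk.nil.copy (by congr 1; exact Fin.ext (by simp [Fin.last, hj])) rfl,
        by simp [f, hj]⟩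
    · have hj' : j.val ≤ m := by have := j.isLt; omega
      obtain ⟨q, hq⟩ := walkR (m := m) (m - j.val) j.val (by omega)
      refine ⟨q.copy (by congr 1) rfl, ?_⟩
      simp only [SimpleGraph.Walk.length_copy, hq, f, if_neg hj]
      omega

lemma dist_eq :
    (Rgraph m).dist (RV.C 0) (RV.C (Fin.last (m + 1))) = 2 * m + 1 := by
  obtain ⟨p, hp⟩ := walkFrom (m := m) (RV.C 0)
  have hf0 : f (RV.C (0 : Fin (m + 2))) = 0 := by simp [f]
  have hfl : f (RV.C (Fin.last (m + 1)) : RV m) = 2 * m + 1 := by simp [f, Fin.last]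
  have hreach : (Rgraph m).Reachable (RV.C 0) (RV.C (Fin.last (m + 1))) := ⟨p⟩
  refine le_antisymm ?_ ?_
  · have := SimpleGraph.dist_le p
    omega
  · obtain ⟨q, hq⟩ := hreach.exists_walk_length_eq_dist
    have := f_le_of_walk q
    omega

lemma ediam_eq : (Rgraph m).ediam = (2 * m + 1 : ℕ) := by
  have hf0 : f (RV.C (0 : Fin (m + 2))) = 0 := by simp [f]
  have hfl : f (RV.C (Fin.last (m + 1)) : RV m) = 2 * m + 1 := by simp [f, Fin.last]
  refine le_antisymm (SimpleGraph.ediam_le_of_edist_le fun u v => ?_) ?_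
  · obtain ⟨p, hp⟩ := walkTo u
    obtain ⟨q, hq⟩ := walkTo v
    obtain ⟨p', hp'⟩ := walkFrom u
    obtain ⟨q', hq'⟩ := walkFrom v
    have h1 := SimpleGraph.edist_le (p.reverse.append q)
    have h2 := SimpleGraph.edist_le (p'.append q'.reverse)
    simp only [SimpleGraph.Walk.length_append, SimpleGraph.Walk.length_reverse] at h1 h2
    have hu := f_le u
    have hv := f_le v
    rcases le_or_gt (f u + f v) (2 * m + 1) with hc | hc
    · exact h1.trans (Nat.cast_le.mpr (by omega))
    · exact h2.trans (Nat.cast_le.mpr (by omega))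
  · have hd : ((2 * m + 1 : ℕ) : ℕ∞) ≤ (Rgraph m).edist (RV.C 0) (RV.C (Fin.last (m + 1))) := by
      rw [SimpleGraph.edist_eq_sInf]
      refine le_sInf ?_
      rintro x ⟨w, rfl⟩
      have := f_le_of_walk w
      exact_mod_cast Nat.cast_le.mpr (by omega)
    exact hd.trans SimpleGraph.edist_le_ediam

lemma diam_eq : (Rgraph m).diam = 2 * m + 1 := by
  rw [SimpleGraph.diam, ediam_eq]
  exact ENat.toNat_coe _

end Rproof

/-- For `n ≥ 2`, the graph `R n` has diameter `2n - 1`; in fact `dist(c_0, c_n) = 2n - 1`.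
Here `R n` is `Rgraph (n-1)` and `c_n` is its last `C`-vertex. -/
theorem stmt5 (n : ℕ) (hn : 2 ≤ n) :
    (Rgraph (n - 1)).diam = 2 * n - 1 ∧
    (Rgraph (n - 1)).dist (RV.C 0) (RV.C (Fin.last (n - 1 + 1))) = 2 * n - 1 := by
  obtain ⟨k, rfl⟩ : ∃ k, n = k + 1 := ⟨n - 1, by omega⟩
  have h1 : 2 * (k + 1) - 1 = 2 * k + 1 := by omega
  have h2 : k + 1 - 1 = k := rfl
  rw [h1]
  exact ⟨Rproof.diam_eq, Rproof.dist_eq⟩
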